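/- If two metrics g and g̃ in boundary normal coordinates satisfy g^{in} = g̃^{in} = δ_{in} and the eikonal boundary values ω_n = (1 - g^{αβ}ω_αω_β)^{1/2}, ω̃_n = (1 - g̃^{αβ}ω_αω_β)^{1/2} satisfy ‖ω_n - ω̃_n‖_{L²(V)} ≤ δ for every tangential covector ω' in a set of directions satisfying the hypothesis of the directional-recovery lemma, then ‖g - g̃‖_{L²(V)} ≤ Cδ for a constant C depending only on a priori bounds on the metrics. -/

import Mathlib

open MeasureTheory
open scoped BigOperators

noncomputable section

/-- The eikonal boundary value `ω_n = (1 - g^{αβ}ω_αω_β)^{1/2}` at `x` for the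
tangential direction `ω`, where `ginv x = (g^{αβ}(x))`. -/
def omegaN {d m : ℕ} (ginv : (Fin d → ℝ) → Matrix (Fin m) (Fin m) ℝ)
    (ω : Fin m → ℝ) (x : Fin d → ℝ) : ℝ :=
  Real.sqrt (1 - ∑ α : Fin m, ∑ β : Fin m, ginv x α β * ω α * ω β)

/-- if the eikonal boundary values of two metrics (in common
boundary normal coordinates) are `L²(V)`-close within `δ` for a family of
tangential directions satisfying the directional-recovery hypothesis, then the
metrics are `L²(V)`-close within `Cδ`, with `C` depending only on a priori
bounds. -/
theorem boundary_metric_L2_stability {d m N : ℕ}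
    (V : Set (Fin d → ℝ)) (hV : MeasurableSet V) (hVfin : volume V ≠ ⊤)
    (ginv ginv' : (Fin d → ℝ) → Matrix (Fin m) (Fin m) ℝ)
    (hmeas : ∀ α β, Measurable fun x => ginv x α β)
    (hmeas' : ∀ α β, Measurable fun x => ginv' x α β)
    (hsym : ∀ x, (ginv x).IsSymm) (hsym' : ∀ x, (ginv' x).IsSymm)
    (A : ℝ) (hA : 0 < A)
    (hbound : ∀ x ∈ V, ∀ α β, |ginv x α β| ≤ A)
    (hbound' : ∀ x ∈ V, ∀ α β, |ginv' x α β| ≤ A)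
    (ω : Fin N → (Fin m → ℝ))
    (c : ℝ) (hc : 0 < c)
    (hell : ∀ x ∈ V, ∀ k,
      ∑ α : Fin m, ∑ β : Fin m, ginv x α β * ω k α * ω k β ≤ 1 - c)
    (hell' : ∀ x ∈ V, ∀ k,
      ∑ α : Fin m, ∑ β : Fin m, ginv' x α β * ω k α * ω k β ≤ 1 - c)
    (C₀ : ℝ) (hC₀ : 0 < C₀)
    (hrecover : ∀ x ∈ V, ∀ h : Matrix (Fin m) (Fin m) ℝ, h.IsSymm →
      ∃ k, ∀ α β, |h α β| ≤ C₀ *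
        |∑ α' : Fin m, ∑ β' : Fin m, h α' β' * ω k α' * ω k β'|) :
    ∃ C > 0, ∀ δ : ℝ, 0 ≤ δ →
      (∀ k, (∫ x in V, (omegaN ginv (ω k) x - omegaN ginv' (ω k) x) ^ 2) ≤ δ ^ 2) →
      (∫ x in V, ∑ α : Fin m, ∑ β : Fin m, (ginv x α β - ginv' x α β) ^ 2) ≤
        C ^ 2 * δ ^ 2 := by

  classical
  set B : ℝ := ∑ k : Fin N, ∑ α : Fin m, ∑ β : Fin m, |ω k α| * |ω k β| with hBdef
  have hB0 : 0 ≤ B := by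
    apply Finset.sum_nonneg; intro k _
    apply Finset.sum_nonneg; intro α _
    apply Finset.sum_nonneg; intro β _
    positivity
  set S : ℝ := Real.sqrt (1 + A * B) with hSdef
  have hS0 : 0 ≤ S := Real.sqrt_nonneg _
  set K : ℝ := (m : ℝ) ^ 2 * C₀ ^ 2 * 4 * S ^ 2 with hKdef
  have hK0 : 0 ≤ K := by positivity
  -- bound on the quadratic forms on V
  have hQbound : ∀ (G : (Fin d → ℝ) → Matrix (Fin m) (Fin m) ℝ),
      (∀ x ∈ V, ∀ α β, |G x α β| ≤ A) → ∀ x ∈ V, ∀ k,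
      |∑ α : Fin m, ∑ β : Fin m, G x α β * ω k α * ω k β| ≤ A * B := by
    intro G hG x hx k
    have h1 : |∑ α : Fin m, ∑ β : Fin m, G x α β * ω k α * ω k β| ≤
        ∑ α : Fin m, ∑ β : Fin m, A * (|ω k α| * |ω k β|) := by
      refine (Finset.abs_sum_le_sum_abs _ _).trans ?_
      apply Finset.sum_le_sum; intro α _
      refine (Finset.abs_sum_le_sum_abs _ _).trans ?_
      apply Finset.sum_le_sum; intro β _
      rw [abs_mul, abs_mul, mul_assoc]
      exact mul_le_mul_of_nonneg_right (hG x hx α β) (by positivity)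
    refine h1.trans ?_
    have h2 : ∑ α : Fin m, ∑ β : Fin m, A * (|ω k α| * |ω k β|) =
        A * ∑ α : Fin m, ∑ β : Fin m, |ω k α| * |ω k β| := by
      rw [Finset.mul_sum]; congr 1; ext α; rw [Finset.mul_sum]
    rw [h2]
    apply mul_le_mul_of_nonneg_left _ hA.le
    rw [hBdef]
    exact Finset.single_le_sum (f := fun k => ∑ α : Fin m, ∑ β : Fin m, |ω k α| * |ω k β|)
      (fun j _ => by positivity) (Finset.mem_univ k)
  -- sqrt bound
  have homegaN_bound : ∀ (G : (Fin d → ℝ) → Matrix (Fin m) (Fin m) ℝ),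
      (∀ x ∈ V, ∀ α β, |G x α β| ≤ A) → ∀ x ∈ V, ∀ k, omegaN G (ω k) x ≤ S := by
    intro G hG x hx k
    have := hQbound G hG x hx k
    have h1 : 1 - ∑ α : Fin m, ∑ β : Fin m, G x α β * ω k α * ω k β ≤ 1 + A * B := by
      have := abs_le.1 this
      linarith [this.1]
    exact Real.sqrt_le_sqrt h1
  -- squares
  have hsq : ∀ (G : (Fin d → ℝ) → Matrix (Fin m) (Fin m) ℝ),
      (∀ x ∈ V, ∀ k, ∑ α : Fin m, ∑ β : Fin m, G x α β * ω k α * ω k β ≤ 1 - c) →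
      ∀ x ∈ V, ∀ k, (omegaN G (ω k) x) ^ 2 =
        1 - ∑ α : Fin m, ∑ β : Fin m, G x α β * ω k α * ω k β := by
    intro G hG x hx k
    have : (0:ℝ) ≤ 1 - ∑ α : Fin m, ∑ β : Fin m, G x α β * ω k α * ω k β := by
      have := hG x hx k; linarith
    exact Real.sq_sqrt this
  -- pointwise estimate
  have hpoint : ∀ x ∈ V,
      (∑ α : Fin m, ∑ β : Fin m, (ginv x α β - ginv' x α β) ^ 2) ≤
      K * ∑ k : Fin N, (omegaN ginv (ω k) x - omegaN ginv' (ω k) x) ^ 2 := by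
    intro x hx
    obtain ⟨k, hk⟩ := hrecover x hx (fun α β => ginv x α β - ginv' x α β)
      (by
        have h1 := hsym x; have h2 := hsym' x
        unfold Matrix.IsSymm at h1 h2 ⊢
        ext α β
        show ginv x β α - ginv' x β α = ginv x α β - ginv' x α β
        have e1 := congrFun (congrFun h1 α) β
        have e2 := congrFun (congrFun h2 α) β
        simp [Matrix.transpose_apply] at e1 e2
        rw [e1, e2])
    set D : ℝ := ∑ α' : Fin m, ∑ β' : Fin m,
        (ginv x α' β' - ginv' x α' β') * ω k α' * ω k β' with hDdef
    have hDsplit : D = (∑ α : Fin m, ∑ β : Fin m, ginv x α β * ω k α * ω k β) -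
        ∑ α : Fin m, ∑ β : Fin m, ginv' x α β * ω k α * ω k β := by
      rw [hDdef, ← Finset.sum_sub_distrib]
      congr 1; ext α; rw [← Finset.sum_sub_distrib]
      congr 1; ext β; ring
    set u : ℝ := omegaN ginv (ω k) x with hu
    set v : ℝ := omegaN ginv' (ω k) x with hv
    have hu0 : 0 ≤ u := Real.sqrt_nonneg _
    have hv0 : 0 ≤ v := Real.sqrt_nonneg _
    have huS : u ≤ S := homegaN_bound ginv hbound x hx k
    have hvS : v ≤ S := homegaN_bound ginv' hbound' x hx k
    have hu2 := hsq ginv hell x hx k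
    have hv2 := hsq ginv' hell' x hx k
    have hD : D = v ^ 2 - u ^ 2 := by rw [hDsplit, hu2, hv2]; ring
    have hDabs : |D| ≤ 2 * S * |u - v| := by
      rw [hD]
      have : v ^ 2 - u ^ 2 = (v - u) * (v + u) := by ring
      rw [this, abs_mul]
      have h1 : |v - u| = |u - v| := abs_sub_comm v u
      have h2 : |v + u| ≤ 2 * S := by
        rw [abs_of_nonneg (by linarith)]; linarith
      rw [h1]
      calc |u - v| * |v + u| ≤ |u - v| * (2 * S) :=
            mul_le_mul_of_nonneg_left h2 (abs_nonneg _)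
        _ = 2 * S * |u - v| := by ring
    have hentry : ∀ α β, ((ginv x α β - ginv' x α β)) ^ 2 ≤
        C₀ ^ 2 * 4 * S ^ 2 * (u - v) ^ 2 := by
      intro α β
      have h1 : |ginv x α β - ginv' x α β| ≤ C₀ * (2 * S * |u - v|) :=
        (hk α β).trans (mul_le_mul_of_nonneg_left hDabs hC₀.le)
      have h2 := pow_le_pow_left₀ (abs_nonneg _) h1 2
      rw [sq_abs] at h2
      calc (ginv x α β - ginv' x α β) ^ 2 ≤ (C₀ * (2 * S * |u - v|)) ^ 2 := h2
        _ = C₀ ^ 2 * 4 * S ^ 2 * (u - v) ^ 2 := by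
            rw [mul_pow, mul_pow, mul_pow, sq_abs]; ring
    calc (∑ α : Fin m, ∑ β : Fin m, (ginv x α β - ginv' x α β) ^ 2) ≤
          ∑ _α : Fin m, ∑ _β : Fin m, C₀ ^ 2 * 4 * S ^ 2 * (u - v) ^ 2 := by
          apply Finset.sum_le_sum; intro α _
          apply Finset.sum_le_sum; intro β _
          exact hentry α β
      _ = (m : ℝ) ^ 2 * (C₀ ^ 2 * 4 * S ^ 2 * (u - v) ^ 2) := by
          simp [Finset.sum_const]; ring
      _ ≤ K * ∑ j : Fin N, (omegaN ginv (ω j) x - omegaN ginv' (ω j) x) ^ 2 := by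
          rw [hKdef]
          have : (u - v) ^ 2 ≤
              ∑ j : Fin N, (omegaN ginv (ω j) x - omegaN ginv' (ω j) x) ^ 2 :=
            Finset.single_le_sum
              (f := fun j => (omegaN ginv (ω j) x - omegaN ginv' (ω j) x) ^ 2)
              (fun j _ => sq_nonneg _) (Finset.mem_univ k)
          nlinarith [sq_nonneg ((m:ℝ)), sq_nonneg C₀, sq_nonneg S]
  -- measurability
  have hQmeas : ∀ (G : (Fin d → ℝ) → Matrix (Fin m) (Fin m) ℝ),
      (∀ α β, Measurable fun x => G x α β) → ∀ k,
      Measurable fun x => ∑ α : Fin m, ∑ β : Fin m, G x α β * ω k α * ω k β := by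
    intro G hG k
    apply Finset.measurable_sum; intro α _
    apply Finset.measurable_sum; intro β _
    exact ((hG α β).mul measurable_const).mul measurable_const
  have homegameas : ∀ (G : (Fin d → ℝ) → Matrix (Fin m) (Fin m) ℝ),
      (∀ α β, Measurable fun x => G x α β) → ∀ k,
      Measurable fun x => omegaN G (ω k) x := by
    intro G hG k
    exact (measurable_const.sub (hQmeas G hG k)).sqrt
  refine ⟨Real.sqrt (K * N) + 1, by positivity, ?_⟩
  intro δ hδ hδk
  -- integrability
  have hFmeas : Measurable fun x =>
      ∑ α : Fin m, ∑ β : Fin m, (ginv x α β - ginv' x α β) ^ 2 := by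
    apply Finset.measurable_sum; intro α _
    apply Finset.measurable_sum; intro β _
    exact ((hmeas α β).sub (hmeas' α β)).pow measurable_const
  have hFint : IntegrableOn (fun x =>
      ∑ α : Fin m, ∑ β : Fin m, (ginv x α β - ginv' x α β) ^ 2) V := by
    apply Integrable.mono' (g := fun _ => (m : ℝ) ^ 2 * (2 * A) ^ 2)
      (integrableOn_const hVfin)
      hFmeas.aestronglyMeasurable
    refine (ae_restrict_iff' hV).2 (ae_of_all _ fun x hx => ?_)
    have : ∀ α β, (ginv x α β - ginv' x α β) ^ 2 ≤ (2 * A) ^ 2 := by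
      intro α β
      have h1 : |ginv x α β - ginv' x α β| ≤ 2 * A := by
        have := hbound x hx α β; have := hbound' x hx α β
        have := abs_sub (ginv x α β) (ginv' x α β)
        linarith [abs_sub_abs_le_abs_sub (ginv x α β) (ginv' x α β),
          abs_sub (ginv x α β) (ginv' x α β)]
      have h2 := pow_le_pow_left₀ (abs_nonneg _) h1 2
      rwa [sq_abs] at h2
    rw [Real.norm_eq_abs, abs_of_nonneg (by positivity)]
    calc (∑ α : Fin m, ∑ β : Fin m, (ginv x α β - ginv' x α β) ^ 2) ≤
          ∑ _α : Fin m, ∑ _β : Fin m, (2 * A) ^ 2 := by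
          apply Finset.sum_le_sum; intro α _
          apply Finset.sum_le_sum; intro β _
          exact this α β
      _ = (m : ℝ) ^ 2 * (2 * A) ^ 2 := by simp [Finset.sum_const]; ring
  have hTint : ∀ k : Fin N, IntegrableOn (fun x =>
      (omegaN ginv (ω k) x - omegaN ginv' (ω k) x) ^ 2) V := by
    intro k
    apply Integrable.mono' (g := fun _ => (2 * S) ^ 2)
      (integrableOn_const hVfin)
      (((homegameas ginv hmeas k).sub (homegameas ginv' hmeas' k)).pow
        measurable_const).aestronglyMeasurable
    refine (ae_restrict_iff' hV).2 (ae_of_all _ fun x hx => ?_)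
    have hu0 : (0:ℝ) ≤ omegaN ginv (ω k) x := Real.sqrt_nonneg _
    have hv0 : (0:ℝ) ≤ omegaN ginv' (ω k) x := Real.sqrt_nonneg _
    have huS := homegaN_bound ginv hbound x hx k
    have hvS := homegaN_bound ginv' hbound' x hx k
    rw [Real.norm_eq_abs, abs_of_nonneg (sq_nonneg _)]
    show (omegaN ginv (ω k) x - omegaN ginv' (ω k) x) ^ 2 ≤ (2 * S) ^ 2
    nlinarith
  have hGint : IntegrableOn (fun x =>
      K * ∑ k : Fin N, (omegaN ginv (ω k) x - omegaN ginv' (ω k) x) ^ 2) V := by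
    exact ((integrable_finset_sum Finset.univ (fun k _ => hTint k)).const_mul K)
  have step1 : (∫ x in V, ∑ α : Fin m, ∑ β : Fin m, (ginv x α β - ginv' x α β) ^ 2) ≤
      ∫ x in V, K * ∑ k : Fin N, (omegaN ginv (ω k) x - omegaN ginv' (ω k) x) ^ 2 :=
    setIntegral_mono_on hFint hGint hV hpoint
  have step2 : (∫ x in V, K * ∑ k : Fin N,
      (omegaN ginv (ω k) x - omegaN ginv' (ω k) x) ^ 2) =
      K * ∑ k : Fin N, ∫ x in V, (omegaN ginv (ω k) x - omegaN ginv' (ω k) x) ^ 2 := by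
    rw [integral_const_mul, integral_finset_sum Finset.univ (fun k _ => hTint k)]
  have step3 : (∑ k : Fin N, ∫ x in V,
      (omegaN ginv (ω k) x - omegaN ginv' (ω k) x) ^ 2) ≤ (N : ℝ) * δ ^ 2 := by
    calc (∑ k : Fin N, ∫ x in V, (omegaN ginv (ω k) x - omegaN ginv' (ω k) x) ^ 2) ≤
          ∑ _k : Fin N, δ ^ 2 := Finset.sum_le_sum (fun k _ => hδk k)
      _ = (N : ℝ) * δ ^ 2 := by simp [Finset.sum_const]
  have hKN : K * ((N:ℝ) * δ ^ 2) ≤ (Real.sqrt (K * N) + 1) ^ 2 * δ ^ 2 := by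
    have h1 : Real.sqrt (K * N) ^ 2 = K * N := Real.sq_sqrt (by positivity)
    have h2 : (0:ℝ) ≤ Real.sqrt (K * N) := Real.sqrt_nonneg _
    nlinarith [sq_nonneg δ]
  calc (∫ x in V, ∑ α : Fin m, ∑ β : Fin m, (ginv x α β - ginv' x α β) ^ 2) ≤
        K * ∑ k : Fin N, ∫ x in V, (omegaN ginv (ω k) x - omegaN ginv' (ω k) x) ^ 2 := by
        rw [← step2]; exact step1
    _ ≤ K * ((N : ℝ) * δ ^ 2) := mul_le_mul_of_nonneg_left step3 hK0
    _ ≤ (Real.sqrt (K * N) + 1) ^ 2 * δ ^ 2 := hKN
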